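/- If G is a connected graph with γ_t(G) ≤ a(G) + 1, then γ_t(G*) ≤ a(G*) + 1, where G* is the double graph of G. -/

import Mathlib

open SimpleGraph

/-- The total domination number of a graph. -/
noncomputable def totalDominationNumber {V : Type*} (G : SimpleGraph V) : ℕ :=
  sInf {k | ∃ D : Finset V, (∀ v : V, ∃ u ∈ D, G.Adj v u) ∧ D.card = k}

/-- The annihilation number of a graph. -/
noncomputable def annihilationNumber {V : Type*} (G : SimpleGraph V) : ℕ :=
  sSup {k | ∃ S : Finset V, S.card = k ∧ ∑ v ∈ S, (G.neighborSet v).ncard ≤ G.edgeSet.ncard}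

/-- The double graph `G*` of `G`: two disjoint copies `G₁, G₂` of `G` (the copy of `u`
in `Gᵢ` being `(u, i)`), where for each edge `uv` of `G` the edges `u₁v₂` and `u₂v₁`
are added; equivalently, `(u, i)` and `(v, j)` are adjacent iff `uv ∈ E(G)`. -/
def doubleGraph {V : Type*} (G : SimpleGraph V) : SimpleGraph (V × Fin 2) where
  Adj a b := G.Adj a.1 b.1
  symm := ⟨fun _ _ h => G.adj_symm h⟩
  loopless := ⟨fun a h => G.irrefl (v := a.1) h⟩

lemma doubleGraph_neighborSet {V : Type*} (G : SimpleGraph V) (v : V) (i : Fin 2) :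
    (doubleGraph G).neighborSet (v, i) = (G.neighborSet v) ×ˢ (Set.univ : Set (Fin 2)) := by
  ext p
  simp [doubleGraph, SimpleGraph.mem_neighborSet, Set.mem_prod]

lemma ncard_neighborSet_doubleGraph {V : Type*} [Fintype V] (G : SimpleGraph V) (v : V)
    (i : Fin 2) :
    ((doubleGraph G).neighborSet (v, i)).ncard = 2 * (G.neighborSet v).ncard := by
  classical
  rw [doubleGraph_neighborSet, ← Nat.card_coe_set_eq,
    Nat.card_congr (Equiv.Set.prod _ _), Nat.card_prod, Nat.card_coe_set_eq,
    Nat.card_coe_set_eq, Set.ncard_univ, mul_comm]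
  simp

lemma ncard_neighborSet_eq_degree {V : Type*} [Fintype V] (G : SimpleGraph V)
    [DecidableRel G.Adj] (v : V) : (G.neighborSet v).ncard = G.degree v := by
  rw [← Nat.card_coe_set_eq, Nat.card_eq_fintype_card, G.card_neighborSet_eq_degree]

lemma ncard_edgeSet {V : Type*} [Fintype V] (G : SimpleGraph V) [DecidableRel G.Adj]
    [DecidableEq V] : G.edgeSet.ncard = G.edgeFinset.card := by
  rw [← Nat.card_coe_set_eq, Nat.card_eq_fintype_card, ← SimpleGraph.edgeFinset_card]

lemma ncard_edgeSet_doubleGraph {V : Type*} [Fintype V] (G : SimpleGraph V) :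
    ((doubleGraph G).edgeSet).ncard = 4 * G.edgeSet.ncard := by
  classical
  have hdeg : ∀ p : V × Fin 2, (doubleGraph G).degree p = 2 * G.degree p.1 := by
    intro p
    rw [← ncard_neighborSet_eq_degree, ← ncard_neighborSet_eq_degree]
    have := ncard_neighborSet_doubleGraph G p.1 p.2
    simpa using this
  have h1 : ∑ v, G.degree v = 2 * G.edgeFinset.card := G.sum_degrees_eq_twice_card_edges
  have h2 : ∑ p : V × Fin 2, (doubleGraph G).degree p
      = 2 * (doubleGraph G).edgeFinset.card :=
    (doubleGraph G).sum_degrees_eq_twice_card_edges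
  have h3 : ∑ p : V × Fin 2, (doubleGraph G).degree p = 4 * ∑ v, G.degree v := by
    rw [Fintype.sum_prod_type]
    simp only [hdeg]
    rw [Finset.mul_sum]
    refine Finset.sum_congr rfl fun v _ => ?_
    simp [Finset.sum_const]
    ring
  have : 2 * (doubleGraph G).edgeFinset.card = 2 * (4 * G.edgeFinset.card) := by
    rw [← h2, h3, h1]; ring
  have h4 : (doubleGraph G).edgeFinset.card = 4 * G.edgeFinset.card := by omega
  rw [ncard_edgeSet, ncard_edgeSet, h4]

/-- If `G` is a connected graph (with at least two vertices) satisfying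
`γₜ(G) ≤ a(G) + 1`, then `γₜ(G*) ≤ a(G*) + 1`. -/
theorem stmt_8 {V : Type*} [Fintype V] (G : SimpleGraph V)
    (hconn : G.Connected) (hn : 2 ≤ Fintype.card V)
    (h : totalDominationNumber G ≤ annihilationNumber G + 1) :
    totalDominationNumber (doubleGraph G) ≤ annihilationNumber (doubleGraph G) + 1 := by
  classical
  -- every vertex has a neighbor
  have hadj : ∀ v : V, ∃ u : V, G.Adj v u := by
    intro v
    obtain ⟨w, hw⟩ := Fintype.exists_ne_of_one_lt_card (by omega) v
    obtain ⟨p⟩ := hconn.preconnected v w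
    cases p with
    | nil => exact absurd rfl hw.symm
    | cons hvu q => exact ⟨_, hvu⟩
  -- the set defining γₜ(G) is nonempty
  have hTne : {k | ∃ D : Finset V, (∀ v : V, ∃ u ∈ D, G.Adj v u) ∧ D.card = k}.Nonempty := by
    refine ⟨(Finset.univ : Finset V).card, Finset.univ, fun v => ?_, rfl⟩
    obtain ⟨u, hu⟩ := hadj v
    exact ⟨u, Finset.mem_univ u, hu⟩
  -- γₜ(G*) ≤ γₜ(G)
  have hT : totalDominationNumber (doubleGraph G) ≤ totalDominationNumber G := by
    obtain ⟨D, hD, hcard⟩ := Nat.sInf_mem hTne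
    apply Nat.sInf_le
    refine ⟨D.image (fun u => (u, (0 : Fin 2))), fun p => ?_, ?_⟩
    · obtain ⟨u, hu, hadjv⟩ := hD p.1
      exact ⟨(u, 0), Finset.mem_image_of_mem _ hu, hadjv⟩
    · rw [Finset.card_image_of_injective _ (fun a b hab => (Prod.mk.injEq _ _ _ _ ▸ hab).1),
        hcard]
      rfl
  -- a(G) ≤ a(G*)
  have hA : annihilationNumber G ≤ annihilationNumber (doubleGraph G) := by
    have hne : {k | ∃ S : Finset V, S.card = k ∧
        ∑ v ∈ S, (G.neighborSet v).ncard ≤ G.edgeSet.ncard}.Nonempty :=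
      ⟨0, ∅, by simp⟩
    have hbdd : BddAbove {k | ∃ S : Finset V, S.card = k ∧
        ∑ v ∈ S, (G.neighborSet v).ncard ≤ G.edgeSet.ncard} := by
      refine ⟨Fintype.card V, fun k hk => ?_⟩
      obtain ⟨S, hS, -⟩ := hk
      rw [← hS]
      exact Finset.card_le_card (Finset.subset_univ S) |>.trans (by simp)
    obtain ⟨S, hScard, hSsum⟩ := Nat.sSup_mem hne hbdd
    have hbdd' : BddAbove {k | ∃ S : Finset (V × Fin 2), S.card = k ∧
        ∑ v ∈ S, ((doubleGraph G).neighborSet v).ncard ≤ (doubleGraph G).edgeSet.ncard} := by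
      refine ⟨Fintype.card (V × Fin 2), fun k hk => ?_⟩
      obtain ⟨T, hT, -⟩ := hk
      rw [← hT]
      exact Finset.card_le_card (Finset.subset_univ T) |>.trans (by simp)
    have hle : annihilationNumber G ≤ 2 * annihilationNumber G := by omega
    refine hle.trans ?_
    apply le_csSup hbdd'
    refine ⟨S ×ˢ (Finset.univ : Finset (Fin 2)), ?_, ?_⟩
    · have h2 : (Finset.univ : Finset (Fin 2)).card = 2 := rfl
      rw [Finset.card_product, hScard, h2, mul_comm]
      rfl
    · rw [Finset.sum_product]
      have : ∀ v ∈ S, ∑ i : Fin 2, ((doubleGraph G).neighborSet (v, i)).ncard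
          = 4 * (G.neighborSet v).ncard := by
        intro v _
        simp only [ncard_neighborSet_doubleGraph]
        simp [Finset.sum_const]
        ring
      rw [Finset.sum_congr rfl this, ← Finset.mul_sum, ncard_edgeSet_doubleGraph]
      exact Nat.mul_le_mul_left 4 hSsum
  omega
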